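/- Let (Ω, μ) be a measure space, n ≥ 3 an integer, 2* = 2n/(n-2), p > 1 a real number, p̂ = (2* + p - 1)/(2* - 1) and α = (n-2)(p+1)/4. Let h, B, C, u : Ω → ℝ be measurable with B > 0, C ≥ 0 and u > 0 μ-a.e. Assume the integrals ∫ B·u^{2*-1} dμ, ∫ C·u^{-p} dμ and ∫ (h⁺)^{(n+2)/4}·B^{(2-n)/4} dμ are finite and that ∫ B·u^{2*-1} dμ + ∫ C·u^{-p} dμ ≤ ∫ h⁺·u dμ. Then ((α+1)^{α+1}/α^α)^{1/p̂} · ∫ C^{1/p̂}·B^{(p̂-1)/p̂} dμ ≤ ∫ (h⁺)^{(n+2)/4}·B^{(2-n)/4} dμ. -/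

import Mathlib

open MeasureTheory

private lemma amgm17 {α z D : ℝ} (hα : 0 < α) (hz : 0 < z) (hD : 0 ≤ D) :
    ((α + 1) ^ (α + 1) / α ^ α) ^ (1 / (α + 1)) * D ^ (1 / (α + 1)) ≤ z + D * z ^ (-α) := by
  have hα1 : (0:ℝ) < α + 1 := by linarith
  set w₁ : ℝ := α / (α + 1) with hw₁def
  set w₂ : ℝ := 1 / (α + 1) with hw₂def
  have hw₁ : 0 ≤ w₁ := by positivity
  have hw₂ : 0 ≤ w₂ := by positivity
  have hw : w₁ + w₂ = 1 := by rw [hw₁def, hw₂def]; field_simp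
  have hzα : (0:ℝ) ≤ z ^ (-α) := Real.rpow_nonneg hz.le _
  have hp₁ : (0:ℝ) ≤ (α + 1) / α * z := by positivity
  have hp₂ : (0:ℝ) ≤ (α + 1) * (D * z ^ (-α)) := by positivity
  have hgm := Real.geom_mean_le_arith_mean2_weighted hw₁ hw₂ hp₁ hp₂ hw
  have e1 : (α + 1) * w₂ = 1 := by rw [hw₂def]; field_simp
  have e2 : α * w₂ = w₁ := by rw [hw₁def, hw₂def]; field_simp
  have c₁ : w₁ * ((α + 1) / α) = 1 := by rw [hw₁def]; field_simp
  have hrhs : w₁ * ((α + 1) / α * z) + w₂ * ((α + 1) * (D * z ^ (-α))) = z + D * z ^ (-α) := by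
    calc w₁ * ((α + 1) / α * z) + w₂ * ((α + 1) * (D * z ^ (-α)))
        = (w₁ * ((α + 1) / α)) * z + (w₂ * (α + 1)) * (D * z ^ (-α)) := by ring
      _ = z + D * z ^ (-α) := by rw [c₁, mul_comm w₂, e1, one_mul, one_mul]
  have A1 : ((α + 1) / α * z) ^ w₁ = (α + 1) ^ w₁ / α ^ w₁ * z ^ w₁ := by
    rw [Real.mul_rpow (by positivity) hz.le, Real.div_rpow hα1.le hα.le]
  have A2 : ((α + 1) * (D * z ^ (-α))) ^ w₂ = (α + 1) ^ w₂ * (D ^ w₂ * z ^ (-w₁)) := by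
    rw [Real.mul_rpow hα1.le (by positivity), Real.mul_rpow hD hzα,
      ← Real.rpow_mul hz.le, neg_mul, e2]
  have A3 : (α + 1) ^ w₁ * (α + 1) ^ w₂ = α + 1 := by
    rw [← Real.rpow_add hα1, hw, Real.rpow_one]
  have A4 : z ^ w₁ * z ^ (-w₁) = 1 := by
    rw [← Real.rpow_add hz, add_neg_cancel, Real.rpow_zero]
  have A5 : ((α + 1) ^ (α + 1) / α ^ α) ^ w₂ = (α + 1) / α ^ w₁ := by
    rw [Real.div_rpow (by positivity) (by positivity),
      ← Real.rpow_mul hα1.le, ← Real.rpow_mul hα.le, e1, e2, Real.rpow_one]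
  have hlhs : ((α + 1) / α * z) ^ w₁ * ((α + 1) * (D * z ^ (-α))) ^ w₂
      = ((α + 1) ^ (α + 1) / α ^ α) ^ w₂ * D ^ w₂ := by
    rw [A1, A2, A5]
    calc (α + 1) ^ w₁ / α ^ w₁ * z ^ w₁ * ((α + 1) ^ w₂ * (D ^ w₂ * z ^ (-w₁)))
        = ((α + 1) ^ w₁ * (α + 1) ^ w₂) / α ^ w₁ * D ^ w₂ * (z ^ w₁ * z ^ (-w₁)) := by ring
      _ = (α + 1) / α ^ w₁ * D ^ w₂ := by rw [A3, A4, mul_one]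
  rw [hrhs, hlhs] at hgm
  exact hgm

private lemma core17 {θ ph α x y k l : ℝ} (hθ : 0 < θ) (hph : 1 < ph)
    (hαph : α + 1 = ph / θ) (hα0 : 0 < α) (hx : 0 ≤ x) (hy : 0 ≤ y) (hk : 0 ≤ k) (hl : 0 ≤ l)
    (h1 : x + y ≤ k ^ θ * x ^ (1 - θ)) (h2 : l ≤ y ^ (1 / ph) * x ^ ((ph - 1) / ph)) :
    ((α + 1) ^ (α + 1) / α ^ α) ^ (1 / ph) * l ≤ k := by
  have hph0 : (0:ℝ) < ph := lt_trans one_pos hph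
  have hM : (0:ℝ) ≤ (α + 1) ^ (α + 1) / α ^ α := by positivity
  rcases eq_or_lt_of_le hx with h0 | hx0
  · have hxe : x = 0 := h0.symm
    have : l ≤ 0 := by
      have he : ((ph - 1) / ph) ≠ 0 := (div_pos (by linarith) hph0).ne'
      rw [hxe, Real.zero_rpow he, mul_zero] at h2
      exact h2
    rw [le_antisymm this hl, mul_zero]
    exact hk
  · have hθph : θ * (α + 1) = ph := by rw [hαph]; field_simp
    have hA : l ^ ph * x ^ (1 - ph) ≤ y := by
      have hr := Real.rpow_le_rpow hl h2 hph0.le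
      rw [Real.mul_rpow (Real.rpow_nonneg hy _) (Real.rpow_nonneg hx _),
        ← Real.rpow_mul hy, ← Real.rpow_mul hx,
        one_div_mul_cancel hph0.ne', Real.rpow_one,
        div_mul_cancel₀ _ hph0.ne'] at hr
      calc l ^ ph * x ^ (1 - ph) ≤ (y * x ^ (ph - 1)) * x ^ (1 - ph) :=
            mul_le_mul_of_nonneg_right hr (Real.rpow_nonneg hx _)
        _ = y * (x ^ (ph - 1) * x ^ (1 - ph)) := by ring
        _ = y := by rw [← Real.rpow_add hx0]; norm_num
    have hz : 0 < x ^ θ := Real.rpow_pos_of_pos hx0 θ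
    have hD : 0 ≤ l ^ ph := Real.rpow_nonneg hl _
    have hB : x ^ θ + l ^ ph * (x ^ θ) ^ (-α) ≤ k ^ θ := by
      have hxpow : 0 < x ^ (1 - θ) := Real.rpow_pos_of_pos hx0 _
      have hz1 : x ^ θ * x ^ (1 - θ) = x := by
        rw [← Real.rpow_add hx0]; norm_num
      have hz2 : (x ^ θ) ^ (-α) * x ^ (1 - θ) = x ^ (1 - ph) := by
        rw [← Real.rpow_mul hx0.le, ← Real.rpow_add hx0]
        congr 1
        linear_combination -hθph
      have hle : (x ^ θ + l ^ ph * (x ^ θ) ^ (-α)) * x ^ (1 - θ) ≤ k ^ θ * x ^ (1 - θ) := by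
        have hid : (x ^ θ + l ^ ph * (x ^ θ) ^ (-α)) * x ^ (1 - θ)
            = x + l ^ ph * x ^ (1 - ph) := by
          calc (x ^ θ + l ^ ph * (x ^ θ) ^ (-α)) * x ^ (1 - θ)
              = x ^ θ * x ^ (1 - θ) + l ^ ph * ((x ^ θ) ^ (-α) * x ^ (1 - θ)) := by ring
            _ = x + l ^ ph * x ^ (1 - ph) := by rw [hz1, hz2]
        rw [hid]
        calc x + l ^ ph * x ^ (1 - ph) ≤ x + y := by linarith
          _ ≤ k ^ θ * x ^ (1 - θ) := h1
      exact le_of_mul_le_mul_right hle hxpow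
    have hC := (amgm17 hα0 hz hD).trans hB
    have e : ((α + 1) ^ (α + 1) / α ^ α) ^ (1 / (α + 1)) * (l ^ ph) ^ (1 / (α + 1))
        = (((α + 1) ^ (α + 1) / α ^ α) ^ (1 / ph) * l) ^ θ := by
      rw [Real.mul_rpow (Real.rpow_nonneg hM _) hl, ← Real.rpow_mul hM, ← Real.rpow_mul hl]
      congr 1
      · congr 1
        rw [hαph, one_div_div]
        ring
      · congr 1
        rw [hαph, one_div_div]
        field_simp
    rw [e] at hC
    exact (Real.rpow_le_rpow_iff (by positivity) hk hθ).mp hC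

private lemma pt17a {H Bx Ux a b s t qq : ℝ} (hH : 0 ≤ H) (hB : 0 < Bx) (hU : 0 ≤ Ux)
    (ha : a * s = 1) (hb : b * s + t = 0) (hq : qq * t = 1) :
    (H ^ a * Bx ^ b) ^ s * (Bx * Ux ^ qq) ^ t = H * Ux := by
  rw [Real.mul_rpow (Real.rpow_nonneg hH a) (Real.rpow_nonneg hB.le b),
      Real.mul_rpow hB.le (Real.rpow_nonneg hU qq),
      ← Real.rpow_mul hH, ← Real.rpow_mul hB.le, ← Real.rpow_mul hU, ha, hq,
      Real.rpow_one, Real.rpow_one]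
  have hone : Bx ^ (b * s) * Bx ^ t = 1 := by
    rw [← Real.rpow_add hB, hb, Real.rpow_zero]
  calc H * Bx ^ (b * s) * (Bx ^ t * Ux) = H * Ux * (Bx ^ (b * s) * Bx ^ t) := by ring
    _ = H * Ux := by rw [hone, mul_one]

private lemma pt17b {Cx Bx Ux s t mp qq : ℝ} (hC : 0 ≤ Cx) (hB : 0 ≤ Bx) (hU : 0 < Ux)
    (hh : mp * s + qq * t = 0) :
    (Cx * Ux ^ mp) ^ s * (Bx * Ux ^ qq) ^ t = Cx ^ s * Bx ^ t := by
  rw [Real.mul_rpow hC (Real.rpow_nonneg hU.le mp),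
      Real.mul_rpow hB (Real.rpow_nonneg hU.le qq),
      ← Real.rpow_mul hU.le, ← Real.rpow_mul hU.le]
  have hone : Ux ^ (mp * s) * Ux ^ (qq * t) = 1 := by
    rw [← Real.rpow_add hU, hh, Real.rpow_zero]
  calc Cx ^ s * Ux ^ (mp * s) * (Bx ^ t * Ux ^ (qq * t))
      = Cx ^ s * Bx ^ t * (Ux ^ (mp * s) * Ux ^ (qq * t)) := by ring
    _ = Cx ^ s * Bx ^ t := by rw [hone, mul_one]

theorem stmt17 {Ω : Type*} [MeasurableSpace Ω] (μ : Measure Ω) (n : ℕ) (hn : 3 ≤ n)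
    (p : ℝ) (hp : 1 < p)
    (phat α : ℝ)
    (hphat : phat = (2 * (n : ℝ) / ((n : ℝ) - 2) + p - 1) /
      (2 * (n : ℝ) / ((n : ℝ) - 2) - 1))
    (hα : α = ((n : ℝ) - 2) * (p + 1) / 4)
    (h B C u : Ω → ℝ) (hmh : Measurable h) (hmB : Measurable B) (hmC : Measurable C)
    (hmu : Measurable u)
    (hB : ∀ᵐ x ∂μ, 0 < B x) (hC : ∀ᵐ x ∂μ, 0 ≤ C x) (hu : ∀ᵐ x ∂μ, 0 < u x)
    (hfin1 : ∫⁻ x, ENNReal.ofReal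
        (B x * u x ^ (2 * (n : ℝ) / ((n : ℝ) - 2) - 1)) ∂μ ≠ ⊤)
    (hfin2 : ∫⁻ x, ENNReal.ofReal (C x * u x ^ (-p)) ∂μ ≠ ⊤)
    (hfin3 : ∫⁻ x, ENNReal.ofReal
        ((max (h x) 0) ^ (((n : ℝ) + 2) / 4) * B x ^ ((2 - (n : ℝ)) / 4)) ∂μ ≠ ⊤)
    (hyp : (∫⁻ x, ENNReal.ofReal (B x * u x ^ (2 * (n : ℝ) / ((n : ℝ) - 2) - 1)) ∂μ) +
        (∫⁻ x, ENNReal.ofReal (C x * u x ^ (-p)) ∂μ) ≤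
        ∫⁻ x, ENNReal.ofReal (max (h x) 0 * u x) ∂μ) :
    ENNReal.ofReal (((α + 1) ^ (α + 1) / α ^ α) ^ (1 / phat)) *
      ∫⁻ x, ENNReal.ofReal (C x ^ (1 / phat) * B x ^ ((phat - 1) / phat)) ∂μ ≤
      ∫⁻ x, ENNReal.ofReal
        ((max (h x) 0) ^ (((n : ℝ) + 2) / 4) * B x ^ ((2 - (n : ℝ)) / 4)) ∂μ := by
  have hN : (3:ℝ) ≤ (n:ℝ) := by exact_mod_cast hn
  set N : ℝ := (n:ℝ) with hNdef
  have hN2 : (0:ℝ) < N - 2 := by linarith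
  have hN2' : (0:ℝ) < N + 2 := by linarith
  set q : ℝ := 2 * N / (N - 2) - 1 with hqdef
  have hqval : q = (N + 2) / (N - 2) := by rw [hqdef]; field_simp; ring
  set θ : ℝ := 4 / (N + 2) with hθdef
  have hθ0 : 0 < θ := by rw [hθdef]; positivity
  have hθ1 : θ < 1 := by rw [hθdef, div_lt_one hN2']; linarith
  have h1θ : 1 - θ = (N - 2) / (N + 2) := by rw [hθdef]; field_simp; ring
  have h1θ0 : 0 ≤ 1 - θ := by linarith
  have hph : phat = (N + 2 + p * (N - 2)) / (N + 2) := by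
    rw [hphat, hqval]
    field_simp
    try ring
    try tauto
  have hph1 : 1 < phat := by
    rw [hph, lt_div_iff₀ hN2']; nlinarith
  have hph0 : (0:ℝ) < phat := lt_trans one_pos hph1
  have hα0 : 0 < α := by
    rw [hα]; exact div_pos (mul_pos hN2 (by linarith)) (by norm_num)
  have hαph : α + 1 = phat / θ := by
    rw [hα, hph, hθdef]
    first | (field_simp; ring) | field_simp
  -- exponent identities
  have ea : (N + 2) / 4 * θ = 1 := by
    rw [hθdef]; first | (field_simp; ring) | field_simp
  have eb : (2 - N) / 4 * θ + (1 - θ) = 0 := by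
    rw [h1θ, hθdef]; first | (field_simp; ring) | field_simp
  have eq' : q * (1 - θ) = 1 := by
    rw [hqval, h1θ]; first | (field_simp; ring) | field_simp
  have hq1 : q * (phat - 1) = p := by
    rw [hqval, hph]
    rw [div_sub' hN2'.ne', div_mul_div_comm]
    rw [div_eq_iff (by positivity)]
    ring
  have ept : (-p) * (1 / phat) + q * ((phat - 1) / phat) = 0 := by
    have expand : (-p) * (1 / phat) + q * ((phat - 1) / phat)
        = (q * (phat - 1) - p) * (1 / phat) := by ring
    rw [expand, hq1, sub_self, zero_mul]
  -- measurable functions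
  have mF : Measurable fun x => ENNReal.ofReal
      ((max (h x) 0) ^ ((N + 2) / 4) * B x ^ ((2 - N) / 4)) :=
    (((hmh.max measurable_const).pow measurable_const).mul
      (hmB.pow measurable_const)).ennreal_ofReal
  have mG : Measurable fun x => ENNReal.ofReal (B x * u x ^ q) :=
    (hmB.mul (hmu.pow measurable_const)).ennreal_ofReal
  have mY : Measurable fun x => ENNReal.ofReal (C x * u x ^ (-p)) :=
    (hmC.mul (hmu.pow measurable_const)).ennreal_ofReal
  set X := ∫⁻ x, ENNReal.ofReal (B x * u x ^ q) ∂μ with hXdef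
  set Y := ∫⁻ x, ENNReal.ofReal (C x * u x ^ (-p)) ∂μ with hYdef
  set K := ∫⁻ x, ENNReal.ofReal
      ((max (h x) 0) ^ ((N + 2) / 4) * B x ^ ((2 - N) / 4)) ∂μ with hKdef
  set L := ∫⁻ x, ENNReal.ofReal (C x ^ (1 / phat) * B x ^ ((phat - 1) / phat)) ∂μ with hLdef
  -- Hölder 1
  have conj1 : ((N + 2) / 4).HolderConjugate ((N + 2) / (N - 2)) := by
    constructor
    · rw [inv_div, inv_div, ← add_div, inv_one, div_eq_one_iff_eq hN2'.ne']; ring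
    · exact div_pos hN2' (by norm_num)
    · exact div_pos hN2' hN2
  have eA : (∫⁻ x, (ENNReal.ofReal ((max (h x) 0) ^ ((N + 2) / 4) * B x ^ ((2 - N) / 4)) ^ θ)
      ^ ((N + 2) / 4) ∂μ) = K := by
    rw [hKdef]
    refine lintegral_congr fun x => ?_
    rw [← ENNReal.rpow_mul, mul_comm θ, ea, ENNReal.rpow_one]
  have eB : (∫⁻ x, (ENNReal.ofReal (B x * u x ^ q) ^ (1 - θ)) ^ ((N + 2) / (N - 2)) ∂μ) = X := by
    rw [hXdef]
    refine lintegral_congr fun x => ?_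
    rw [← ENNReal.rpow_mul]
    have : (1 - θ) * ((N + 2) / (N - 2)) = 1 := by rw [h1θ]; field_simp
    rw [this, ENNReal.rpow_one]
  have i1 : 1 / ((N + 2) / 4) = θ := by rw [one_div_div]; try exact hθdef.symm
  have i2 : 1 / ((N + 2) / (N - 2)) = 1 - θ := by rw [one_div_div]; try exact h1θ.symm
  have hold1 : (∫⁻ x, ENNReal.ofReal (max (h x) 0 * u x) ∂μ) ≤ K ^ θ * X ^ (1 - θ) := by
    calc (∫⁻ x, ENNReal.ofReal (max (h x) 0 * u x) ∂μ)
        = ∫⁻ x, ENNReal.ofReal ((max (h x) 0) ^ ((N + 2) / 4) * B x ^ ((2 - N) / 4)) ^ θ *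
            ENNReal.ofReal (B x * u x ^ q) ^ (1 - θ) ∂μ := by
          refine lintegral_congr_ae ?_
          filter_upwards [hB, hu] with x hBx hux
          have hHx : (0:ℝ) ≤ max (h x) 0 := le_max_right _ _
          have hn1 : (0:ℝ) ≤ (max (h x) 0) ^ ((N + 2) / 4) * B x ^ ((2 - N) / 4) :=
            mul_nonneg (Real.rpow_nonneg hHx _) (Real.rpow_nonneg hBx.le _)
          have hn2 : (0:ℝ) ≤ B x * u x ^ q :=
            mul_nonneg hBx.le (Real.rpow_nonneg hux.le _)
          rw [← pt17a hHx hBx hux.le ea eb eq',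
            ENNReal.ofReal_mul (Real.rpow_nonneg hn1 _),
            ← ENNReal.ofReal_rpow_of_nonneg hn1 hθ0.le,
            ← ENNReal.ofReal_rpow_of_nonneg hn2 h1θ0]
      _ ≤ (∫⁻ x, (ENNReal.ofReal ((max (h x) 0) ^ ((N + 2) / 4) * B x ^ ((2 - N) / 4)) ^ θ)
            ^ ((N + 2) / 4) ∂μ) ^ (1 / ((N + 2) / 4)) *
          (∫⁻ x, (ENNReal.ofReal (B x * u x ^ q) ^ (1 - θ)) ^ ((N + 2) / (N - 2)) ∂μ)
            ^ (1 / ((N + 2) / (N - 2))) :=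
        ENNReal.lintegral_mul_le_Lp_mul_Lq μ conj1
          (mF.pow measurable_const).aemeasurable (mG.pow measurable_const).aemeasurable
      _ = K ^ θ * X ^ (1 - θ) := by rw [eA, eB, i1, i2]
  -- Hölder 2
  have conj2 : phat.HolderConjugate (phat / (phat - 1)) :=
    (Real.holderConjugate_iff_eq_conjExponent hph1).mpr rfl
  have hph1' : (0:ℝ) < phat - 1 := by linarith
  have eC : (∫⁻ x, (ENNReal.ofReal (C x * u x ^ (-p)) ^ (1 / phat)) ^ phat ∂μ) = Y := by
    rw [hYdef]
    refine lintegral_congr fun x => ?_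
    rw [← ENNReal.rpow_mul, one_div_mul_cancel hph0.ne', ENNReal.rpow_one]
  have eD : (∫⁻ x, (ENNReal.ofReal (B x * u x ^ q) ^ ((phat - 1) / phat))
      ^ (phat / (phat - 1)) ∂μ) = X := by
    rw [hXdef]
    refine lintegral_congr fun x => ?_
    rw [← ENNReal.rpow_mul]
    have : (phat - 1) / phat * (phat / (phat - 1)) = 1 := by field_simp
    rw [this, ENNReal.rpow_one]
  have i3 : 1 / (phat / (phat - 1)) = (phat - 1) / phat := one_div_div _ _
  have hold2 : L ≤ Y ^ (1 / phat) * X ^ ((phat - 1) / phat) := by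
    rw [hLdef]
    calc (∫⁻ x, ENNReal.ofReal (C x ^ (1 / phat) * B x ^ ((phat - 1) / phat)) ∂μ)
        = ∫⁻ x, ENNReal.ofReal (C x * u x ^ (-p)) ^ (1 / phat) *
            ENNReal.ofReal (B x * u x ^ q) ^ ((phat - 1) / phat) ∂μ := by
          refine lintegral_congr_ae ?_
          filter_upwards [hB, hC, hu] with x hBx hCx hux
          have hn1 : (0:ℝ) ≤ C x * u x ^ (-p) :=
            mul_nonneg hCx (Real.rpow_nonneg hux.le _)
          have hn2 : (0:ℝ) ≤ B x * u x ^ q :=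
            mul_nonneg hBx.le (Real.rpow_nonneg hux.le _)
          rw [← pt17b hCx hBx.le hux ept,
            ENNReal.ofReal_mul (Real.rpow_nonneg hn1 _),
            ← ENNReal.ofReal_rpow_of_nonneg hn1 (by positivity),
            ← ENNReal.ofReal_rpow_of_nonneg hn2 (div_nonneg hph1'.le hph0.le)]
      _ ≤ (∫⁻ x, (ENNReal.ofReal (C x * u x ^ (-p)) ^ (1 / phat)) ^ phat ∂μ) ^ (1 / phat) *
          (∫⁻ x, (ENNReal.ofReal (B x * u x ^ q) ^ ((phat - 1) / phat))
            ^ (phat / (phat - 1)) ∂μ) ^ (1 / (phat / (phat - 1))) :=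
        ENNReal.lintegral_mul_le_Lp_mul_Lq μ conj2
          (mY.pow measurable_const).aemeasurable (mG.pow measurable_const).aemeasurable
      _ = Y ^ (1 / phat) * X ^ ((phat - 1) / phat) := by rw [eC, eD, i3]
  -- finiteness
  have hKθfin : K ^ θ * X ^ (1 - θ) ≠ ⊤ :=
    ENNReal.mul_ne_top (ENNReal.rpow_ne_top_of_nonneg hθ0.le hfin3)
      (ENNReal.rpow_ne_top_of_nonneg h1θ0 hfin1)
  have hXY : X + Y ≤ K ^ θ * X ^ (1 - θ) := hyp.trans hold1
  have hLbfin : Y ^ (1 / phat) * X ^ ((phat - 1) / phat) ≠ ⊤ :=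
    ENNReal.mul_ne_top (ENNReal.rpow_ne_top_of_nonneg (by positivity) hfin2)
      (ENNReal.rpow_ne_top_of_nonneg (div_nonneg hph1'.le hph0.le) hfin1)
  have hLfin : L ≠ ⊤ := ne_top_of_le_ne_top hLbfin hold2
  -- pass to reals
  have h1r : X.toReal + Y.toReal ≤ K.toReal ^ θ * X.toReal ^ (1 - θ) := by
    have hmono := ENNReal.toReal_mono hKθfin hXY
    rw [ENNReal.toReal_add hfin1 hfin2, ENNReal.toReal_mul,
      ← ENNReal.toReal_rpow, ← ENNReal.toReal_rpow] at hmono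
    exact hmono
  have h2r : L.toReal ≤ Y.toReal ^ (1 / phat) * X.toReal ^ ((phat - 1) / phat) := by
    have hmono := ENNReal.toReal_mono hLbfin hold2
    rw [ENNReal.toReal_mul, ← ENNReal.toReal_rpow, ← ENNReal.toReal_rpow] at hmono
    exact hmono
  have hcore := core17 hθ0 hph1 hαph hα0 ENNReal.toReal_nonneg ENNReal.toReal_nonneg
    ENNReal.toReal_nonneg ENNReal.toReal_nonneg h1r h2r
  have hc : (0:ℝ) ≤ ((α + 1) ^ (α + 1) / α ^ α) ^ (1 / phat) :=
    Real.rpow_nonneg (div_nonneg (Real.rpow_nonneg (by linarith) _)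
      (Real.rpow_nonneg hα0.le _)) _
  calc ENNReal.ofReal (((α + 1) ^ (α + 1) / α ^ α) ^ (1 / phat)) * L
      = ENNReal.ofReal (((α + 1) ^ (α + 1) / α ^ α) ^ (1 / phat)) *
        ENNReal.ofReal L.toReal := by rw [ENNReal.ofReal_toReal hLfin]
    _ = ENNReal.ofReal (((α + 1) ^ (α + 1) / α ^ α) ^ (1 / phat) * L.toReal) :=
        (ENNReal.ofReal_mul hc).symm
    _ ≤ ENNReal.ofReal K.toReal := ENNReal.ofReal_le_ofReal hcore
    _ = K := ENNReal.ofReal_toReal hfin3
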